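/- Let d ≥ 1 and let a ∈ ℝ^d be a point on a sphere centered at the origin (i.e., ‖a‖ > 0) that is not contained in the nonnegative orthant, i.e., a_i < 0 for some coordinate i. Then there exists a point b ∈ ℝ^d on the same sphere, ‖b‖ = ‖a‖, such that every coordinate of b − a is strictly positive and every coordinate of b is nonnegative. -/

import Mathlib

theorem exists_nonneg_point_on_sphere_dominating
    (d : ℕ) (hd : 1 ≤ d) (a : EuclideanSpace ℝ (Fin d))
    (ha : 0 < ‖a‖) (hneg : ∃ i, a i < 0) :
    ∃ b : EuclideanSpace ℝ (Fin d),
      ‖b‖ = ‖a‖ ∧ (∀ i, 0 < b i - a i) ∧ (∀ i, 0 ≤ b i) := by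
  obtain ⟨j, hj⟩ := hneg
  have hd' : (1:ℝ) ≤ (d:ℝ) := by exact_mod_cast hd
  set ε : ℝ := -(a j) / (2 * d) with hεdef
  have hεpos : 0 < ε := div_pos (by linarith) (by linarith)
  have hdε : (d:ℝ) * ε ^ 2 < a j ^ 2 := by
    rw [hεdef, div_pow, ← mul_div_assoc, div_lt_iff₀ (by positivity)]
    nlinarith [sq_nonneg (a j), hj, sq_nonneg ((d:ℝ) - 1)]
  set c : EuclideanSpace ℝ (Fin d) := WithLp.toLp 2 (fun i => max (a i) ε) with hc
  have hcdef : ∀ i, c i = max (a i) ε := fun i => rfl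
  have hcpos : ∀ i, 0 < c i := fun i => lt_of_lt_of_le hεpos (le_max_right _ _)
  have hca : ∀ i, a i ≤ c i := fun i => le_max_left _ _
  have hle : ∀ i, c i ^ 2 ≤ a i ^ 2 + ε ^ 2 := by
    intro i
    rcases le_or_gt ε (a i) with h | h
    · rw [hcdef i, max_eq_left h]; nlinarith [sq_nonneg ε]
    · rw [hcdef i, max_eq_right h.le]; nlinarith [sq_nonneg (a i)]
  have hcj : c j = ε := by rw [hcdef j]; exact max_eq_right (le_of_lt (hj.trans hεpos))
  have hkey : ∑ i, c i ^ 2 < ∑ i, a i ^ 2 := by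
    have hjmem : j ∈ (Finset.univ : Finset (Fin d)) := Finset.mem_univ j
    rw [← Finset.add_sum_erase _ _ hjmem, ← Finset.add_sum_erase _ (fun i => a i ^ 2) hjmem]
    have hsum_le : ∑ i ∈ Finset.univ.erase j, c i ^ 2
        ≤ ∑ i ∈ Finset.univ.erase j, (a i ^ 2 + ε ^ 2) :=
      Finset.sum_le_sum fun i _ => hle i
    have hcard : (Finset.univ.erase j).card = d - 1 := by
      rw [Finset.card_erase_of_mem hjmem]
      simp
    have hsplit : ∑ i ∈ Finset.univ.erase j, (a i ^ 2 + ε ^ 2)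
        = (∑ i ∈ Finset.univ.erase j, a i ^ 2) + ((d:ℝ) - 1) * ε ^ 2 := by
      rw [Finset.sum_add_distrib, Finset.sum_const, hcard, nsmul_eq_mul]
      have : ((d - 1 : ℕ) : ℝ) = (d:ℝ) - 1 := by
        have := Nat.cast_sub hd (R := ℝ)
        simpa using this
      rw [this]
    rw [hcj]
    nlinarith [hsum_le, hsplit]
  have hcnorm : ‖c‖ < ‖a‖ := by
    rw [EuclideanSpace.norm_eq, EuclideanSpace.norm_eq]
    apply Real.sqrt_lt_sqrt (by positivity)
    simpa [Real.norm_eq_abs, sq_abs] using hkey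
  have hcnorm_pos : 0 < ‖c‖ := by
    rw [norm_pos_iff]
    intro h
    have := congrArg (fun v : EuclideanSpace ℝ (Fin d) => v j) h
    simp only [hcj] at this
    exact absurd this (by simpa using hεpos.ne')
  set lam : ℝ := ‖a‖ / ‖c‖ with hlamdef
  have hlam1 : 1 < lam := (one_lt_div hcnorm_pos).mpr hcnorm
  refine ⟨lam • c, ?_, ?_, ?_⟩
  · rw [norm_smul, Real.norm_eq_abs, abs_of_pos (by linarith), hlamdef,
      div_mul_cancel₀ _ hcnorm_pos.ne']
  · intro i
    have hbi : (lam • c) i = lam * c i := rfl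
    rw [hbi]
    have : c i < lam * c i := (lt_mul_iff_one_lt_left (hcpos i)).mpr hlam1
    have := hca i
    linarith
  · intro i
    have hbi : (lam • c) i = lam * c i := rfl
    rw [hbi]
    exact le_of_lt (mul_pos (by linarith) (hcpos i))
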